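/- Let π : ℝ^n → ℝ^m be a linear map and let K_1, …, K_l be nonempty convex subsets of ℝ^n such that π(K_i) = {v_i} is a single point for each i, the points v_1, …, v_l are pairwise distinct, and each v_i is an extreme point of conv{v_1, …, v_l}. Then the set of extreme points of conv(K_1 ∪ … ∪ K_l) is exactly the union over i of the sets of extreme points of the K_i. (This is the vertex-counting step in the proof of Lemma 3.6: the vertices of the π-twisted Cayley sum are precisely the union of the vertices of the R_i's.) -/

import Mathlib

/-- Cayley position: `π : ℝ^n → ℝ^m` linear, `K i` nonempty convex sets with `π(K i) = {v i}`,
the `v i` pairwise distinct and each an extreme point of `conv(range v)`.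
Then the extreme points of `conv(⋃ K i)` are exactly the union of the extreme points
of the `K i`. -/
theorem stmt_5 (n m l : ℕ) (π : (Fin n → ℝ) →ₗ[ℝ] (Fin m → ℝ))
    (K : Fin l → Set (Fin n → ℝ)) (v : Fin l → (Fin m → ℝ))
    (hne : ∀ i, (K i).Nonempty) (hconv : ∀ i, Convex ℝ (K i))
    (himg : ∀ i, π '' K i = {v i})
    (hvinj : Function.Injective v)
    (hext : ∀ i, v i ∈ Set.extremePoints ℝ (convexHull ℝ (Set.range v))) :
    Set.extremePoints ℝ (convexHull ℝ (⋃ j, K j)) = ⋃ i, Set.extremePoints ℝ (K i) := by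
  classical
  set S : Set (Fin n → ℝ) := ⋃ j, K j with hSdef
  -- every point of a `K i` is mapped to `v i`
  have hvK : ∀ i, ∀ x ∈ K i, π x = v i := by
    intro i x hx
    have : π x ∈ ({v i} : Set (Fin m → ℝ)) := by
      rw [← himg i]; exact ⟨x, hx, rfl⟩
    simpa using this
  -- the image of the hull lies in `conv(range v)`
  have hA : ∀ y ∈ convexHull ℝ S, π y ∈ convexHull ℝ (Set.range v) := by
    intro y hy
    have h1 : π y ∈ π '' convexHull ℝ S := Set.mem_image_of_mem _ hy
    rw [π.image_convexHull] at h1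
    refine convexHull_mono ?_ h1
    rintro z ⟨w, hw, rfl⟩
    obtain ⟨j, hj⟩ := Set.mem_iUnion.1 hw
    exact ⟨j, (hvK j w hj).symm⟩
  -- points of the hull mapped to `v i` lie in `K i`
  have hB : ∀ i, ∀ y ∈ convexHull ℝ S, π y = v i → y ∈ K i := by
    intro i
    have hG : Convex ℝ {y | y ∈ convexHull ℝ S ∧ (π y = v i → y ∈ K i)} := by
      rintro y ⟨hyC, hy⟩ z ⟨hzC, hz⟩ a b ha hb hab
      refine ⟨(convex_convexHull ℝ S) hyC hzC ha hb hab, fun hw => ?_⟩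
      rcases ha.eq_or_lt with ha0 | ha0
      · have hb1 : b = 1 := by linarith
        have hwz : a • y + b • z = z := by rw [← ha0, hb1]; simp
        rw [hwz] at hw ⊢
        exact hz hw
      rcases hb.eq_or_lt with hb0 | hb0
      · have ha1 : a = 1 := by linarith
        have hwy : a • y + b • z = y := by rw [← hb0, ha1]; simp
        rw [hwy] at hw ⊢
        exact hy hw
      have hmem : v i ∈ openSegment ℝ (π y) (π z) :=
        ⟨a, b, ha0, hb0, hab, by rw [← hw]; simp⟩
      obtain ⟨hy', hz'⟩ := (mem_extremePoints.1 (hext i)).2 _ (hA y hyC) _ (hA z hzC) hmem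
      exact (hconv i) (hy hy') (hz hz') ha hb hab
    intro y hy hpy
    have hsub : S ⊆ {y | y ∈ convexHull ℝ S ∧ (π y = v i → y ∈ K i)} := by
      intro x hx
      obtain ⟨j, hj⟩ := Set.mem_iUnion.1 hx
      refine ⟨subset_convexHull ℝ S hx, fun h => ?_⟩
      have : v j = v i := (hvK j x hj).symm.trans h
      rwa [← hvinj this]
    exact (convexHull_min hsub hG hy).2 hpy
  ext x
  simp only [Set.mem_iUnion]
  constructor
  · intro hx
    obtain ⟨i, hxi⟩ := Set.mem_iUnion.1 (extremePoints_convexHull_subset hx)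
    refine ⟨i, hxi, fun y hy z hz hseg => ?_⟩
    exact hx.2 (subset_convexHull ℝ S (Set.mem_iUnion.2 ⟨i, hy⟩))
      (subset_convexHull ℝ S (Set.mem_iUnion.2 ⟨i, hz⟩)) hseg
  · rintro ⟨i, hxi, hxe⟩
    refine ⟨subset_convexHull ℝ S (Set.mem_iUnion.2 ⟨i, hxi⟩), fun y hy z hz hseg => ?_⟩
    have hpx : π x = v i := hvK i x hxi
    obtain ⟨a, b, ha, hb, hab, hxx⟩ := hseg
    have hpseg : v i ∈ openSegment ℝ (π y) (π z) :=
      ⟨a, b, ha, hb, hab, by rw [← hpx, ← hxx]; simp⟩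
    obtain ⟨hy', hz'⟩ := (mem_extremePoints.1 (hext i)).2 _ (hA y hy) _ (hA z hz) hpseg
    exact hxe (hB i y hy hy') (hB i z hz hz') ⟨a, b, ha, hb, hab, hxx⟩
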